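/- For bounded linear operators A and X on a complex Hilbert space, w(AX + XA*) ≤ 2‖A‖ w(X). -/

import Mathlib

open scoped InnerProductSpace
open ContinuousLinearMap Metric

/-- The numerical radius of a bounded operator on a complex Hilbert space. -/
noncomputable def numRadius {H : Type*} [NormedAddCommGroup H] [InnerProductSpace ℂ H]
    (T : H →L[ℂ] H) : ℝ :=
  sSup {r : ℝ | ∃ x : H, ‖x‖ = 1 ∧ r = ‖(inner ℂ (T x) x : ℂ)‖}

/-- The block operator `[[0, X], [Y, 0]]` acting on `H ⊕ H` (with the `ℓ²` Hilbert space
structure) by `(x, y) ↦ (X y, Y x)`. -/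
noncomputable def blockOp {H : Type*} [NormedAddCommGroup H] [InnerProductSpace ℂ H]
    (X Y : H →L[ℂ] H) : WithLp 2 (H × H) →L[ℂ] WithLp 2 (H × H) :=
  ((WithLp.prodContinuousLinearEquiv 2 ℂ H H).symm.toContinuousLinearMap) ∘L
    ((X ∘L ContinuousLinearMap.snd ℂ H H).prod (Y ∘L ContinuousLinearMap.fst ℂ H H)) ∘L
    ((WithLp.prodContinuousLinearEquiv 2 ℂ H H).toContinuousLinearMap)

/-- `A` is a `G₁` operator: `‖(z - A)⁻¹‖ = 1 / dist (z, σ(A))` for all `z ∉ σ(A)`. -/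
def IsG1 {H : Type*} [NormedAddCommGroup H] [InnerProductSpace ℂ H] [CompleteSpace H]
    (A : H →L[ℂ] H) : Prop :=
  ∀ z : ℂ, z ∉ spectrum ℂ A →
    ‖Ring.inverse (algebraMap ℂ (H →L[ℂ] H) z - A)‖ = 1 / Metric.infDist z (spectrum ℂ A)

/-- The distance between two subsets of `ℂ`. -/
noncomputable def setDist (s t : Set ℂ) : ℝ :=
  sInf {d : ℝ | ∃ z ∈ s, ∃ w ∈ t, d = dist z w}

/-- The Riesz–Dunford functional calculus `f(A)` for `f` analytic on the unit disk and
`σ(A) ⊂ 𝔻`, realized through the Taylor expansion of `f` at `0`. -/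
noncomputable def dunford {H : Type*} [NormedAddCommGroup H] [InnerProductSpace ℂ H]
    [CompleteSpace H] (f : ℂ → ℂ) (A : H →L[ℂ] H) : H →L[ℂ] H :=
  ∑' n : ℕ, (iteratedDeriv n f 0 / n.factorial) • A ^ n

/-- The modulus `|C| = (C*C)^{1/2}` of a bounded operator. -/
noncomputable def opAbs {H : Type*} [NormedAddCommGroup H] [InnerProductSpace ℂ H]
    [CompleteSpace H] (C : H →L[ℂ] H) : H →L[ℂ] H :=
  CFC.sqrt (ContinuousLinearMap.adjoint C * C)

lemma numRadius_bddAbove {H : Type*} [NormedAddCommGroup H] [InnerProductSpace ℂ H] (X : H →L[ℂ] H) :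
    BddAbove {r : ℝ | ∃ x : H, ‖x‖ = 1 ∧ r = ‖(inner ℂ (X x) x : ℂ)‖} := by
  refine ⟨‖X‖, fun r ⟨x, hx, hr⟩ => ?_⟩
  calc r = ‖(inner ℂ (X x) x : ℂ)‖ := hr
    _ ≤ ‖X x‖ * ‖x‖ := norm_inner_le_norm _ _
    _ ≤ ‖X‖ * ‖x‖ * ‖x‖ := by gcongr; exact X.le_opNorm x
    _ = ‖X‖ := by rw [hx]; ring

lemma numRadius_nonneg {H : Type*} [NormedAddCommGroup H] [InnerProductSpace ℂ H] (X : H →L[ℂ] H) : 0 ≤ numRadius X := by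
  rcases Set.eq_empty_or_nonempty
      {r : ℝ | ∃ x : H, ‖x‖ = 1 ∧ r = ‖(inner ℂ (X x) x : ℂ)‖} with h | ⟨r, hr⟩
  · unfold numRadius
    rw [h, Real.sSup_empty]
  · obtain ⟨x, hx, hrx⟩ := hr
    have h0 : (0:ℝ) ≤ r := hrx ▸ norm_nonneg _
    exact h0.trans (le_csSup (numRadius_bddAbove X) ⟨x, hx, hrx⟩)

lemma inner_le_numRadius {H : Type*} [NormedAddCommGroup H] [InnerProductSpace ℂ H] (X : H →L[ℂ] H) (y : H) :
    ‖(inner ℂ (X y) y : ℂ)‖ ≤ numRadius X * ‖y‖ ^ 2 := by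
  rcases eq_or_ne y 0 with rfl | hy
  · simp
  · have hny : (0:ℝ) < ‖y‖ := norm_pos_iff.mpr hy
    set x : H := ((‖y‖ : ℂ))⁻¹ • y with hxdef
    have hx : ‖x‖ = 1 := by
      rw [hxdef, norm_smul, norm_inv, Complex.norm_real, Real.norm_eq_abs,
        abs_of_pos hny, inv_mul_cancel₀ hny.ne']
    have key : (inner ℂ (X x) x : ℂ) = ((‖y‖ : ℂ))⁻¹ ^ 2 * inner ℂ (X y) y := by
      rw [hxdef]
      simp only [map_smul, inner_smul_left, inner_smul_right, map_inv₀, Complex.conj_ofReal]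
      ring
    have hkn : ‖(inner ℂ (X x) x : ℂ)‖ = ‖y‖⁻¹ ^ 2 * ‖(inner ℂ (X y) y : ℂ)‖ := by
      rw [key, norm_mul, norm_pow, norm_inv, Complex.norm_real, Real.norm_eq_abs,
        abs_of_pos hny]
    have hle : ‖(inner ℂ (X x) x : ℂ)‖ ≤ numRadius X :=
      le_csSup (numRadius_bddAbove X) ⟨x, hx, rfl⟩
    rw [hkn] at hle
    have h2 : ‖(inner ℂ (X y) y : ℂ)‖ = (‖y‖⁻¹ ^ 2 * ‖(inner ℂ (X y) y : ℂ)‖) * ‖y‖ ^ 2 := by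
      field_simp
    rw [h2]
    gcongr

lemma sum_inner_le {H : Type*} [NormedAddCommGroup H] [InnerProductSpace ℂ H] (X : H →L[ℂ] H) (u v : H) :
    ‖(inner ℂ (X u) v : ℂ) + inner ℂ (X v) u‖ ≤ numRadius X * (‖u‖ ^ 2 + ‖v‖ ^ 2) := by
  have key : (inner ℂ (X (u + v)) (u + v) : ℂ) - inner ℂ (X (u - v)) (u - v)
      = 2 * ((inner ℂ (X u) v : ℂ) + inner ℂ (X v) u) := by
    simp only [map_add, map_sub, inner_add_left, inner_add_right, inner_sub_left,
      inner_sub_right]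
    ring
  have h1 := inner_le_numRadius X (u + v)
  have h2 := inner_le_numRadius X (u - v)
  have par : ‖u + v‖ ^ 2 + ‖u - v‖ ^ 2 = 2 * (‖u‖ ^ 2 + ‖v‖ ^ 2) := by
    have := parallelogram_law_with_norm ℂ u v
    nlinarith [this]
  have hmain : ‖(2 : ℂ) * ((inner ℂ (X u) v : ℂ) + inner ℂ (X v) u)‖
      ≤ numRadius X * (‖u + v‖ ^ 2) + numRadius X * (‖u - v‖ ^ 2) := by
    rw [← key]
    exact (norm_sub_le _ _).trans (add_le_add h1 h2)
  rw [norm_mul] at hmain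
  simp only [Complex.norm_ofNat] at hmain
  nlinarith [hmain, par, numRadius_nonneg X]

theorem stmt1 {H : Type*} [NormedAddCommGroup H] [InnerProductSpace ℂ H] [CompleteSpace H] (A X : H →L[ℂ] H) :
    numRadius (A * X + X * ContinuousLinearMap.adjoint A) ≤ 2 * ‖A‖ * numRadius X := by
  have hw := numRadius_nonneg X
  apply Real.sSup_le _ (by positivity)
  rintro r ⟨x, hx, hr⟩
  have hexp : (inner ℂ ((A * X + X * ContinuousLinearMap.adjoint A) x) x : ℂ)
      = inner ℂ (X x) (ContinuousLinearMap.adjoint A x)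
        + inner ℂ (X (ContinuousLinearMap.adjoint A x)) x := by
    simp only [ContinuousLinearMap.add_apply, ContinuousLinearMap.mul_apply, inner_add_left]
    rw [← ContinuousLinearMap.adjoint_inner_right A (X x) x]
  set v := ContinuousLinearMap.adjoint A x with hv
  rcases eq_or_ne v 0 with hv0 | hv0
  · rw [hr, hexp, hv0]
    have hz : (inner ℂ (X x) (0:H) : ℂ) + inner ℂ (X (0:H)) x = 0 := by simp
    rw [hz, norm_zero]
    positivity
  · have hnv : 0 < ‖v‖ := norm_pos_iff.mpr hv0
    set t : ℝ := Real.sqrt ‖v‖ with ht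
    have htpos : 0 < t := Real.sqrt_pos.mpr hnv
    have ht2 : t ^ 2 = ‖v‖ := Real.sq_sqrt hnv.le
    have hne : (t : ℂ) ≠ 0 := by exact_mod_cast htpos.ne'
    have key : (inner ℂ (X ((t:ℂ) • x)) ((t:ℂ)⁻¹ • v) : ℂ) + inner ℂ (X ((t:ℂ)⁻¹ • v)) ((t:ℂ) • x)
        = inner ℂ (X x) v + inner ℂ (X v) x := by
      simp only [map_smul, inner_smul_left, inner_smul_right, map_inv₀, Complex.conj_ofReal]
      field_simp
    have hb := sum_inner_le X ((t:ℂ) • x) ((t:ℂ)⁻¹ • v)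
    rw [key] at hb
    have hnorm1 : ‖(t:ℂ) • x‖ ^ 2 = t ^ 2 := by
      rw [norm_smul, hx, mul_one, Complex.norm_real, Real.norm_eq_abs, abs_of_pos htpos]
    have hnorm2 : ‖(t:ℂ)⁻¹ • v‖ ^ 2 = ‖v‖ := by
      rw [norm_smul, norm_inv, Complex.norm_real, Real.norm_eq_abs, abs_of_pos htpos, mul_pow,
        ← ht2]
      field_simp
    have hnormv : ‖v‖ ≤ ‖A‖ := by
      calc ‖v‖ ≤ ‖ContinuousLinearMap.adjoint A‖ * ‖x‖ :=
            (ContinuousLinearMap.adjoint A).le_opNorm x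
        _ = ‖A‖ := by
            rw [hx, mul_one, LinearIsometryEquiv.norm_map ContinuousLinearMap.adjoint A]
    rw [hr, hexp]
    calc ‖(inner ℂ (X x) v : ℂ) + inner ℂ (X v) x‖
        ≤ numRadius X * (‖(t:ℂ) • x‖ ^ 2 + ‖(t:ℂ)⁻¹ • v‖ ^ 2) := hb
      _ = numRadius X * (2 * ‖v‖) := by rw [hnorm1, hnorm2, ht2]; ring
      _ ≤ 2 * ‖A‖ * numRadius X := by nlinarith
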